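/- Let X^1,...,X^N (N ≥ 2) be i.i.d. from a probability measure ν on X, and let h : X → ℝ be measurable with 0 < h ≤ M pointwise and ν(h) > 0, and let b ≥ 0 with b ≤ M (the conditional-path weight). Then for each i, E[ h(X^i) / (Σ_{j=1}^N h(X^j) + b) ] ≥ (1/(N−1)) · ν(h) / (ν(h) + (2M)/(N−1)). -/

import Mathlib

open MeasureTheory ProbabilityTheory

/-- A bounded a.e.-strongly-measurable function is integrable on a finite measure. -/
lemma bdd_integrable {Ω : Type*} [MeasurableSpace Ω] (P : Measure Ω) [IsFiniteMeasure P]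
    {f : Ω → ℝ} (hf : AEStronglyMeasurable f P) (C : ℝ) (hC : ∀ ω, |f ω| ≤ C) :
    Integrable f P :=
  (integrable_const C).mono' hf (Filter.Eventually.of_forall fun ω => by
    simpa [Real.norm_eq_abs] using hC ω)

/-- Tangent line trick: convexity of `t ↦ a/(a+b+t)` at `t0`. -/
lemma tangent_ineq {a b t t0 : ℝ} (ha : 0 < a) (hb : 0 ≤ b) (ht : 0 ≤ t) (ht0 : 0 ≤ t0) :
    a / (a + b + t0) - a / (a + b + t0) ^ 2 * (t - t0) ≤ a / (a + t + b) := by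
  have h1 : 0 < a + b + t0 := by linarith
  have h2 : 0 < a + t + b := by linarith
  rw [← sub_nonneg]
  have key : a / (a + t + b) - (a / (a + b + t0) - a / (a + b + t0) ^ 2 * (t - t0))
      = a * (t - t0) ^ 2 / ((a + b + t0) ^ 2 * (a + t + b)) := by
    field_simp
    ring
  rw [key]
  positivity

/-- Jensen step: for i.i.d. `X^1,…,X^N` from `ν`, `0 < h ≤ M`, `0 ≤ b ≤ M`,
`E[h(X^i)/(Σ_j h(X^j)+b)] ≥ (1/(N−1))·ν(h)/(ν(h)+2M/(N−1))`. -/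
theorem stmt7 {Ω X : Type*} [MeasurableSpace Ω] [MeasurableSpace X]
    (P : Measure Ω) [IsProbabilityMeasure P]
    (ν : Measure X) [IsProbabilityMeasure ν]
    (N : ℕ) (hN : 2 ≤ N)
    (Xs : Fin N → Ω → X) (hmeas : ∀ i, Measurable (Xs i))
    (hindep : iIndepFun (m := fun _ : Fin N => (inferInstance : MeasurableSpace X)) Xs P)
    (hlaw : ∀ i, Measure.map (Xs i) P = ν)
    (h : X → ℝ) (hh : Measurable h)
    (M : ℝ) (hpos : ∀ x, 0 < h x) (hb : ∀ x, h x ≤ M)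
    (hνh : 0 < ∫ x, h x ∂ν)
    (b : ℝ) (hb0 : 0 ≤ b) (hbM : b ≤ M) :
    ∀ i : Fin N,
      (1 / ((N:ℝ) - 1)) * (∫ x, h x ∂ν) / ((∫ x, h x ∂ν) + 2 * M / ((N:ℝ) - 1))
        ≤ ∫ ω, h (Xs i ω) / ((∑ j, h (Xs j ω)) + b) ∂P := by
  intro i
  set m : ℝ := ∫ x, h x ∂ν with hm
  have hN1 : (1:ℝ) ≤ (N:ℝ) - 1 := by
    have : (2:ℝ) ≤ (N:ℝ) := by exact_mod_cast hN
    linarith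
  have hN1pos : (0:ℝ) < (N:ℝ) - 1 := by linarith
  -- M > 0
  have hinth : Integrable h ν :=
    bdd_integrable ν hh.aestronglyMeasurable M fun x =>
      abs_le.2 ⟨by linarith [hpos x, hb x], hb x⟩
  have hmM : m ≤ M := by
    calc m ≤ ∫ _x, M ∂ν := integral_mono hinth (integrable_const M) fun x => hb x
    _ = M := by simp
  have hM : 0 < M := lt_of_lt_of_le hνh hmM
  set t0 : ℝ := ((N:ℝ) - 1) * m with ht0def
  have ht0 : 0 < t0 := mul_pos hN1pos hνh
  set g : X → ℝ := fun x => h x / (h x + b + t0) ^ 2 with hgdef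
  have hgmeas : Measurable g := hh.div (((hh.add_const b).add_const t0).pow_const 2)
  have hgbound : ∀ x, |g x| ≤ M / t0 ^ 2 := by
    intro x
    have h1 : 0 < h x + b + t0 := by linarith [hpos x, ht0.le]
    have h2 : t0 ^ 2 ≤ (h x + b + t0) ^ 2 := by nlinarith [hpos x, ht0]
    have hg0 : 0 ≤ g x := div_nonneg (hpos x).le (by positivity)
    rw [abs_of_nonneg hg0]
    exact div_le_div₀ (le_of_lt (lt_of_lt_of_le (hpos x) (hb x))) (hb x) (by positivity) h2
  -- notation
  set A : Ω → ℝ := fun ω => h (Xs i ω) with hA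
  set T : Ω → ℝ := fun ω => ∑ j ∈ Finset.univ.erase i, h (Xs j ω) with hT
  have hAmeas : Measurable A := hh.comp (hmeas i)
  have hTmeas : Measurable T := Finset.measurable_sum _ fun j _ => hh.comp (hmeas j)
  have hApos : ∀ ω, 0 < A ω := fun ω => hpos _
  have hTpos : ∀ ω, 0 ≤ T ω := fun ω => Finset.sum_nonneg fun j _ => (hpos _).le
  have hTbound : ∀ ω, T ω ≤ ((N:ℝ) - 1) * M := by
    intro ω
    calc T ω ≤ ∑ _j ∈ Finset.univ.erase i, M := Finset.sum_le_sum fun j _ => hb _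
    _ = ((N:ℝ) - 1) * M := by
      have h1 : (1:ℕ) ≤ N := le_trans (by norm_num) hN
      rw [Finset.sum_const, Finset.card_erase_of_mem (Finset.mem_univ i),
        Finset.card_univ, Fintype.card_fin, nsmul_eq_mul, Nat.cast_sub h1]
      norm_num
  have hsum : ∀ ω, (∑ j, h (Xs j ω)) = A ω + T ω := by
    intro ω
    rw [hA, hT]
    exact (Finset.add_sum_erase _ _ (Finset.mem_univ i)).symm
  -- integrability
  have int_rhs : Integrable (fun ω => A ω / ((∑ j, h (Xs j ω)) + b)) P := by
    refine bdd_integrable P ?_ 1 ?_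
    · exact (hAmeas.div ((Finset.measurable_sum _ fun j _ => hh.comp (hmeas j)).add_const b)).aestronglyMeasurable
    · intro ω
      have hd : 0 < (∑ j, h (Xs j ω)) + b := by
        rw [hsum ω]; linarith [hApos ω, hTpos ω]
      have hle : A ω ≤ (∑ j, h (Xs j ω)) + b := by
        rw [hsum ω]; linarith [hTpos ω]
      rw [abs_of_nonneg (div_nonneg (hApos ω).le hd.le)]
      exact (div_le_one hd).2 hle
  have intA : Integrable (fun ω => A ω / (A ω + b + t0)) P := by
    refine bdd_integrable P (hAmeas.div ((hAmeas.add_const b).add_const t0)).aestronglyMeasurable 1 ?_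
    intro ω
    have hd : 0 < A ω + b + t0 := by linarith [hApos ω, ht0]
    rw [abs_of_nonneg (div_nonneg (hApos ω).le hd.le)]
    exact (div_le_one hd).2 (by linarith [ht0.le])
  have intgT : Integrable (fun ω => g (Xs i ω) * (T ω - t0)) P := by
    refine bdd_integrable P ((hgmeas.comp (hmeas i)).mul (hTmeas.sub measurable_const)).aestronglyMeasurable
      ((M / t0 ^ 2) * (((N:ℝ) - 1) * M + t0)) ?_
    intro ω
    rw [abs_mul]
    refine mul_le_mul (hgbound _) ?_ (abs_nonneg _) (by positivity)
    rw [abs_le]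
    have hNM : 0 ≤ ((N:ℝ) - 1) * M := by positivity
    exact ⟨by linarith [hTpos ω, ht0.le], by linarith [hTbound ω, ht0.le]⟩
  -- pointwise bound and integral_mono
  have step1 : ∫ ω, (A ω / (A ω + b + t0) - g (Xs i ω) * (T ω - t0)) ∂P
      ≤ ∫ ω, A ω / ((∑ j, h (Xs j ω)) + b) ∂P := by
    refine integral_mono (intA.sub intgT) int_rhs fun ω => ?_
    rw [hsum ω]
    have := tangent_ineq (hApos ω) hb0 (hTpos ω) ht0.le (a := A ω) (t := T ω)
    simpa [hgdef, hA] using this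
  -- the linear term vanishes
  have hGmap : ∫ ω, g (Xs i ω) ∂P = ∫ x, g x ∂ν := by
    rw [← hlaw i, integral_map (hmeas i).aemeasurable hgmeas.aestronglyMeasurable]
  set G : ℝ := ∫ x, g x ∂ν with hG
  have key0 : ∫ ω, g (Xs i ω) * (T ω - t0) ∂P = 0 := by
    have expand : ∀ ω, g (Xs i ω) * (T ω - t0)
        = (∑ j ∈ Finset.univ.erase i, g (Xs i ω) * h (Xs j ω)) - g (Xs i ω) * t0 := by
      intro ω
      simp only [hT, ← Finset.mul_sum]
      ring
    have intgj : ∀ j ∈ Finset.univ.erase i,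
        Integrable (fun ω => g (Xs i ω) * h (Xs j ω)) P := by
      intro j _
      refine bdd_integrable P ((hgmeas.comp (hmeas i)).mul (hh.comp (hmeas j))).aestronglyMeasurable
        ((M / t0 ^ 2) * M) ?_
      intro ω
      rw [abs_mul]
      exact mul_le_mul (hgbound _)
        (abs_le.2 ⟨by linarith [hpos (Xs j ω), hM], hb _⟩) (abs_nonneg _) (by positivity)
    have intg : Integrable (fun ω => g (Xs i ω)) P :=
      bdd_integrable P (hgmeas.comp (hmeas i)).aestronglyMeasurable (M / t0 ^ 2)
        fun ω => hgbound _
    have sum_eq : ∫ ω, (∑ j ∈ Finset.univ.erase i, g (Xs i ω) * h (Xs j ω)) ∂P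
        = ∑ j ∈ Finset.univ.erase i, ∫ ω, g (Xs i ω) * h (Xs j ω) ∂P :=
      integral_finset_sum _ intgj
    have each_eq : ∀ j ∈ Finset.univ.erase i,
        ∫ ω, g (Xs i ω) * h (Xs j ω) ∂P = G * m := by
      intro j hj
      have hij : i ≠ j := (Finset.ne_of_mem_erase hj).symm
      have hind : IndepFun (g ∘ Xs i) (h ∘ Xs j) P :=
        (hindep.indepFun hij).comp hgmeas hh
      have e1 : (∫ ω, g (Xs i ω) * h (Xs j ω) ∂P)
          = (∫ ω, g (Xs i ω) ∂P) * ∫ ω, h (Xs j ω) ∂P :=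
        IndepFun.integral_fun_mul_eq_mul_integral hind ((hgmeas.comp (hmeas i)).aestronglyMeasurable)
          ((hh.comp (hmeas j)).aestronglyMeasurable)
      rw [e1, hGmap]
      congr 1
      rw [hm, ← hlaw j, integral_map (hmeas j).aemeasurable hh.aestronglyMeasurable]
    calc ∫ ω, g (Xs i ω) * (T ω - t0) ∂P
        = ∫ ω, ((∑ j ∈ Finset.univ.erase i, g (Xs i ω) * h (Xs j ω)) - g (Xs i ω) * t0) ∂P := by
          exact integral_congr_ae (Filter.Eventually.of_forall fun ω => expand ω)
      _ = (∑ j ∈ Finset.univ.erase i, ∫ ω, g (Xs i ω) * h (Xs j ω) ∂P)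
            - ∫ ω, g (Xs i ω) * t0 ∂P := by
          rw [integral_sub (integrable_finset_sum _ intgj) (intg.mul_const t0), sum_eq]
      _ = ((N:ℝ) - 1) * (G * m) - t0 * G := by
          have h1 : (1:ℕ) ≤ N := le_trans (by norm_num) hN
          rw [Finset.sum_congr rfl each_eq, Finset.sum_const,
            Finset.card_erase_of_mem (Finset.mem_univ i), integral_mul_const, hGmap,
            Finset.card_univ, Fintype.card_fin, nsmul_eq_mul, Nat.cast_sub h1]
          push_cast
          ring
      _ = 0 := by rw [ht0def]; ring
  -- lower bound the remaining term
  have step2 : m / (2 * M + t0) ≤ ∫ ω, A ω / (A ω + b + t0) ∂P := by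
    have hmap : ∫ ω, A ω / (A ω + b + t0) ∂P = ∫ x, h x / (h x + b + t0) ∂ν := by
      rw [← hlaw i, integral_map (hmeas i).aemeasurable (f := fun x => h x / (h x + b + t0))
        (hh.div ((hh.add_const b).add_const t0)).aestronglyMeasurable]
    rw [hmap]
    have intf : Integrable (fun x => h x / (h x + b + t0)) ν := by
      refine bdd_integrable ν (hh.div ((hh.add_const b).add_const t0)).aestronglyMeasurable 1 ?_
      intro x
      have hd : 0 < h x + b + t0 := by linarith [hpos x, ht0]
      rw [abs_of_nonneg (div_nonneg (hpos x).le hd.le)]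
      exact (div_le_one hd).2 (by linarith [ht0.le])
    calc m / (2 * M + t0) = ∫ x, h x / (2 * M + t0) ∂ν := by
          rw [integral_div]
      _ ≤ ∫ x, h x / (h x + b + t0) ∂ν := by
          refine integral_mono (hinth.div_const _) intf fun x => ?_
          have hd : 0 < h x + b + t0 := by linarith [hpos x, ht0]
          exact div_le_div_of_nonneg_left (hpos x).le hd (by linarith [hb x])
  -- combine
  have step3 : m / (2 * M + t0) ≤ ∫ ω, A ω / ((∑ j, h (Xs j ω)) + b) ∂P := by
    refine le_trans ?_ step1
    rw [integral_sub intA intgT, key0, sub_zero]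
    exact step2
  refine le_trans (le_of_eq ?_) step3
  rw [ht0def]
  have hden : 0 < m + 2 * M / ((N:ℝ) - 1) := by positivity
  have hden2 : 0 < 2 * M + ((N:ℝ) - 1) * m := by positivity
  rw [div_eq_div_iff hden.ne' hden2.ne']
  field_simp
  ring
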